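/- For every ψ ∈ L with lookahead at most 1 and every trace τ: the DFA D_{ψ_back} accepts a word consistent with τ if and only if the NFA N_{ψ_back} accepts a word consistent with τ. -/

import Mathlib

namespace ALTLf

/-- Sorts of variables: integers or rationals. -/
inductive VSort where
  | int : VSort
  | rat : VSort
  deriving DecidableEq

/-- Domain of each sort. -/
def Dom : VSort → Type
  | .int => ℤ
  | .rat => ℚ

instance instDomRing : (s : VSort) → CommRing (Dom s)
  | .int => inferInstanceAs (CommRing ℤ)
  | .rat => inferInstanceAs (CommRing ℚ)

instance instDomLinearOrder : (s : VSort) → LinearOrder (Dom s)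
  | .int => inferInstanceAs (LinearOrder ℤ)
  | .rat => inferInstanceAs (LinearOrder ℚ)

instance instDomIsStrictOrderedRing : (s : VSort) → IsStrictOrderedRing (Dom s)
  | .int => inferInstanceAs (IsStrictOrderedRing ℤ)
  | .rat => inferInstanceAs (IsStrictOrderedRing ℚ)

instance (s : VSort) : Inhabited (Dom s) := ⟨0⟩

/-- Arithmetic expressions over variables with lookahead/lookback offset `j : ℤ`
(`(v, j)` refers to the value of `v`, `j` instants ahead; negative `j` is lookback,
used for the `pre`-variables: `v_cur = (v,0)`, `v_pre = (v,-1)`). -/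
inductive Expr (V : Type) (sortOf : V → VSort) : VSort → Type where
  | var (v : V) (j : ℤ) : Expr V sortOf (sortOf v)
  | const {s : VSort} (k : Dom s) : Expr V sortOf s
  | add {s : VSort} (e₁ e₂ : Expr V sortOf s) : Expr V sortOf s
  | smul {s : VSort} (k : Dom s) (e : Expr V sortOf s) : Expr V sortOf s

namespace Expr

variable {V : Type} {sortOf : V → VSort}

def eval (σ : (v : V) → ℤ → Dom (sortOf v)) : {s : VSort} → Expr V sortOf s → Dom s
  | _, .var v j => σ v j
  | _, .const k => k
  | _, .add e₁ e₂ => eval σ e₁ + eval σ e₂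
  | _, .smul k e => k * eval σ e

def HasVar : {s : VSort} → Expr V sortOf s → V → ℤ → Prop
  | _, .var v j, w, i => v = w ∧ j = i
  | _, .const _, _, _ => False
  | _, .add e₁ e₂, w, i => HasVar e₁ w i ∨ HasVar e₂ w i
  | _, .smul _ e, w, i => HasVar e w i

def shift (d : ℤ) : {s : VSort} → Expr V sortOf s → Expr V sortOf s
  | _, .var v j => .var v (j + d)
  | _, .const k => .const k
  | _, .add e₁ e₂ => .add (shift d e₁) (shift d e₂)
  | _, .smul k e => .smul k (shift d e)

def hasLook : {s : VSort} → Expr V sortOf s → Bool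
  | _, .var _ j => j != 0
  | _, .const _ => false
  | _, .add e₁ e₂ => hasLook e₁ || hasLook e₂
  | _, .smul _ e => hasLook e

def isVar : {s : VSort} → Expr V sortOf s → Prop
  | _, .var _ _ => True
  | _, _ => False

end Expr

/-- Arithmetic constraints: comparisons of expressions of equal sort, and
(non-)congruence modulo `n` for integer expressions. -/
inductive Constraint (V : Type) (sortOf : V → VSort) where
  | eq {s : VSort} (e₁ e₂ : Expr V sortOf s)
  | ne {s : VSort} (e₁ e₂ : Expr V sortOf s)
  | lt {s : VSort} (e₁ e₂ : Expr V sortOf s)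
  | le {s : VSort} (e₁ e₂ : Expr V sortOf s)
  | cong (n : ℕ) (e₁ e₂ : Expr V sortOf .int)
  | ncong (n : ℕ) (e₁ e₂ : Expr V sortOf .int)

namespace Constraint

variable {V : Type} {sortOf : V → VSort}

def holds (σ : (v : V) → ℤ → Dom (sortOf v)) : Constraint V sortOf → Prop
  | .eq e₁ e₂ => e₁.eval σ = e₂.eval σ
  | .ne e₁ e₂ => e₁.eval σ ≠ e₂.eval σ
  | .lt e₁ e₂ => e₁.eval σ < e₂.eval σ
  | .le e₁ e₂ => e₁.eval σ ≤ e₂.eval σ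
  | .cong n e₁ e₂ => (n : Dom .int) ∣ (e₁.eval σ - e₂.eval σ)
  | .ncong n e₁ e₂ => ¬ ((n : Dom .int) ∣ (e₁.eval σ - e₂.eval σ))

def HasVar : Constraint V sortOf → V → ℤ → Prop
  | .eq e₁ e₂, w, i => e₁.HasVar w i ∨ e₂.HasVar w i
  | .ne e₁ e₂, w, i => e₁.HasVar w i ∨ e₂.HasVar w i
  | .lt e₁ e₂, w, i => e₁.HasVar w i ∨ e₂.HasVar w i
  | .le e₁ e₂, w, i => e₁.HasVar w i ∨ e₂.HasVar w i
  | .cong _ e₁ e₂, w, i => e₁.HasVar w i ∨ e₂.HasVar w i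
  | .ncong _ e₁ e₂, w, i => e₁.HasVar w i ∨ e₂.HasVar w i

/-- `neg c` flips the comparison operator of `c`. -/
def neg : Constraint V sortOf → Constraint V sortOf
  | .eq e₁ e₂ => .ne e₁ e₂
  | .ne e₁ e₂ => .eq e₁ e₂
  | .lt e₁ e₂ => .le e₂ e₁
  | .le e₁ e₂ => .lt e₂ e₁
  | .cong n e₁ e₂ => .ncong n e₁ e₂
  | .ncong n e₁ e₂ => .cong n e₁ e₂

def shift (d : ℤ) : Constraint V sortOf → Constraint V sortOf
  | .eq e₁ e₂ => .eq (e₁.shift d) (e₂.shift d)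
  | .ne e₁ e₂ => .ne (e₁.shift d) (e₂.shift d)
  | .lt e₁ e₂ => .lt (e₁.shift d) (e₂.shift d)
  | .le e₁ e₂ => .le (e₁.shift d) (e₂.shift d)
  | .cong n e₁ e₂ => .cong n (e₁.shift d) (e₂.shift d)
  | .ncong n e₁ e₂ => .ncong n (e₁.shift d) (e₂.shift d)

def hasLook : Constraint V sortOf → Bool
  | .eq e₁ e₂ => e₁.hasLook || e₂.hasLook
  | .ne e₁ e₂ => e₁.hasLook || e₂.hasLook
  | .lt e₁ e₂ => e₁.hasLook || e₂.hasLook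
  | .le e₁ e₂ => e₁.hasLook || e₂.hasLook
  | .cong _ e₁ e₂ => e₁.hasLook || e₂.hasLook
  | .ncong _ e₁ e₂ => e₁.hasLook || e₂.hasLook

end Constraint

/-- `c` mentions a `pre` (lookback) variable. -/
def MentionsPre {V : Type} {sortOf : V → VSort} (c : Constraint V sortOf) : Prop :=
  ∃ v j, j < 0 ∧ c.HasVar v j

/-- `c` mentions only current variables (offset `0`). -/
def OnlyCur {V : Type} {sortOf : V → VSort} (c : Constraint V sortOf) : Prop :=
  ∀ v j, c.HasVar v j → j = 0

/-- `c` is over `V_pre ∪ V_cur` (offsets `0` and `-1`). -/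
def OnlyPC {V : Type} {sortOf : V → VSort} (c : Constraint V sortOf) : Prop :=
  ∀ v j, c.HasVar v j → j = 0 ∨ j = -1


/-- Temporal formulas. The logic `L` (ALTLf) corresponds to those built from
`atom`, `and`, `not`, `nextS`, `untl` (predicate `IsL`); the remaining
constructors are the usual abbreviations (needed e.g. in negation normal form). -/
inductive Formula (V : Type) (sortOf : V → VSort) where
  | tt
  | ff
  | atom (c : Constraint V sortOf)
  | and (φ ψ : Formula V sortOf)
  | or (φ ψ : Formula V sortOf)
  | not (φ : Formula V sortOf)
  | nextS (φ : Formula V sortOf)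
  | nextW (φ : Formula V sortOf)
  | glob (φ : Formula V sortOf)
  | untl (φ ψ : Formula V sortOf)

/-- Assignments of the state variables. -/
abbrev Assign (V : Type) (sortOf : V → VSort) : Type := (v : V) → Dom (sortOf v)

/-- A trace is a (finite) sequence of assignments; genuine traces are nonempty. -/
abbrev Trace (V : Type) (sortOf : V → VSort) : Type := List (Assign V sortOf)

def defaultA {V : Type} {sortOf : V → VSort} : Assign V sortOf := fun _ => default

/-- Valuation of variables with offset at instant `i` of a trace (out-of-range
references get a default value; they are guarded by well-definedness). -/
def traceVal {V : Type} {sortOf : V → VSort} (τ : Trace V sortOf) (i : ℕ) :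
    (v : V) → ℤ → Dom (sortOf v) :=
  fun v j => if 0 ≤ (i : ℤ) + j then (τ.getD ((i : ℤ) + j).toNat defaultA) v else default

/-- The constraint `c` is well-defined at instant `i` of `τ`. -/
def WellDefC {V : Type} {sortOf : V → VSort} (c : Constraint V sortOf)
    (τ : Trace V sortOf) (i : ℕ) : Prop :=
  ∀ v j, c.HasVar v j → 0 ≤ (i : ℤ) + j ∧ (i : ℤ) + j < τ.length

/-- Finite-trace satisfaction `τ,i ⊨ ψ`. Constraints hold vacuously when not
well-defined. `untl` is given by the standard unfolding of the recursive clause. -/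
def Sat {V : Type} {sortOf : V → VSort} (τ : Trace V sortOf) :
    Formula V sortOf → ℕ → Prop
  | .tt, _ => True
  | .ff, _ => False
  | .atom c, i => i < τ.length ∧ (¬ WellDefC c τ i ∨ c.holds (traceVal τ i))
  | .and φ ψ, i => Sat τ φ i ∧ Sat τ ψ i
  | .or φ ψ, i => Sat τ φ i ∨ Sat τ ψ i
  | .not φ, i => ¬ Sat τ φ i
  | .nextS φ, i => i + 1 < τ.length ∧ Sat τ φ (i + 1)
  | .nextW φ, i => i + 1 < τ.length → Sat τ φ (i + 1)
  | .glob φ, i => ∀ j, i ≤ j → j < τ.length → Sat τ φ j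
  | .untl φ ψ, i =>
      ∃ j, i ≤ j ∧ j < τ.length ∧ Sat τ ψ j ∧ ∀ k, i ≤ k → k < j → Sat τ φ k

/-- `τ ⊨ ψ`. -/
def Models {V : Type} {sortOf : V → VSort} (τ : Trace V sortOf)
    (ψ : Formula V sortOf) : Prop :=
  Sat τ ψ 0

/-- Membership in the core logic `L` (`ALTLf`). -/
def IsL {V : Type} {sortOf : V → VSort} : Formula V sortOf → Prop
  | .atom _ => True
  | .and φ ψ => IsL φ ∧ IsL ψ
  | .not φ => IsL φ
  | .nextS φ => IsL φ
  | .untl φ ψ => IsL φ ∧ IsL ψ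
  | _ => False

namespace Formula

variable {V : Type} {sortOf : V → VSort}

def HasVar : Formula V sortOf → V → ℤ → Prop
  | .tt, _, _ => False
  | .ff, _, _ => False
  | .atom c, v, j => c.HasVar v j
  | .and φ ψ, v, j => HasVar φ v j ∨ HasVar ψ v j
  | .or φ ψ, v, j => HasVar φ v j ∨ HasVar ψ v j
  | .not φ, v, j => HasVar φ v j
  | .nextS φ, v, j => HasVar φ v j
  | .nextW φ, v, j => HasVar φ v j
  | .glob φ, v, j => HasVar φ v j
  | .untl φ ψ, v, j => HasVar φ v j ∨ HasVar ψ v j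

/-- The set of constraints occurring in a formula. -/
def constraints : Formula V sortOf → Set (Constraint V sortOf)
  | .tt => ∅
  | .ff => ∅
  | .atom c => {c}
  | .and φ ψ => constraints φ ∪ constraints ψ
  | .or φ ψ => constraints φ ∪ constraints ψ
  | .not φ => constraints φ
  | .nextS φ => constraints φ
  | .nextW φ => constraints φ
  | .glob φ => constraints φ
  | .untl φ ψ => constraints φ ∪ constraints ψ

end Formula

/-- `ψ` has lookahead at most `m` (all variables have offsets in `[0, m]`). -/
def LookaheadLe {V : Type} {sortOf : V → VSort} (ψ : Formula V sortOf) (m : ℕ) : Prop :=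
  ∀ v j, ψ.HasVar v j → 0 ≤ j ∧ j ≤ (m : ℤ)

/-- `ψ` is satisfiable: some (nonempty) trace satisfies it. -/
def Satisfiable {V : Type} {sortOf : V → VSort} (ψ : Formula V sortOf) : Prop :=
  ∃ τ : Trace V sortOf, τ ≠ [] ∧ Models τ ψ

/-- The four monitoring states of RV-LTL. -/
inductive RV where
  | ps | cs | cv | pv
  deriving DecidableEq

/-- `τ ⊨ ⟦ψ = s⟧`: ψ is in monitoring state `s` after trace `τ`. -/
def InState {V : Type} {sortOf : V → VSort} (τ : Trace V sortOf)
    (ψ : Formula V sortOf) : RV → Prop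
  | .ps => Models τ ψ ∧ ∀ τ' : Trace V sortOf, τ' ≠ [] → Models (τ ++ τ') ψ
  | .cs => Models τ ψ ∧ ∃ τ' : Trace V sortOf, τ' ≠ [] ∧ ¬ Models (τ ++ τ') ψ
  | .cv => ¬ Models τ ψ ∧ ∃ τ' : Trace V sortOf, τ' ≠ [] ∧ Models (τ ++ τ') ψ
  | .pv => ¬ Models τ ψ ∧ ∀ τ' : Trace V sortOf, τ' ≠ [] → ¬ Models (τ ++ τ') ψ

section Back

variable {V : Type} {sortOf : V → VSort}

/-- `back(c)`: constraints without lookahead get their variables read as "cur";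
constraints with lookahead 1 become `Xw c̄` where `c̄` uses `pre`/`cur`
(i.e. all offsets are shifted by `-1`). -/
def backC (c : Constraint V sortOf) : Formula V sortOf :=
  if c.hasLook then Formula.nextW (.atom (c.shift (-1))) else Formula.atom c

/-- Replace every constraint atom of a formula. -/
def Formula.mapAtoms (f : Constraint V sortOf → Formula V sortOf) :
    Formula V sortOf → Formula V sortOf
  | .tt => .tt
  | .ff => .ff
  | .atom c => f c
  | .and φ ψ => .and (mapAtoms f φ) (mapAtoms f ψ)
  | .or φ ψ => .or (mapAtoms f φ) (mapAtoms f ψ)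
  | .not φ => .not (mapAtoms f φ)
  | .nextS φ => .nextS (mapAtoms f φ)
  | .nextW φ => .nextW (mapAtoms f φ)
  | .glob φ => .glob (mapAtoms f φ)
  | .untl φ ψ => .untl (mapAtoms f φ) (mapAtoms f ψ)

/-- Negation normal form (`nnf true φ ≡ φ`, `nnf false φ ≡ ¬φ`). -/
def nnf : Bool → Formula V sortOf → Formula V sortOf
  | true, .tt => .tt
  | false, .tt => .ff
  | true, .ff => .ff
  | false, .ff => .tt
  | true, .atom c => .atom c
  | false, .atom c => .not (.atom c)
  | b, .not φ => nnf (!b) φ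
  | true, .and φ ψ => .and (nnf true φ) (nnf true ψ)
  | false, .and φ ψ => .or (nnf false φ) (nnf false ψ)
  | true, .or φ ψ => .or (nnf true φ) (nnf true ψ)
  | false, .or φ ψ => .and (nnf false φ) (nnf false ψ)
  | true, .nextS φ => .nextS (nnf true φ)
  | false, .nextS φ => .nextW (nnf false φ)
  | true, .nextW φ => .nextW (nnf true φ)
  | false, .nextW φ => .nextS (nnf false φ)
  | true, .glob φ => .glob (nnf true φ)
  | false, .glob φ => .untl .tt (nnf false φ)
  | true, .untl φ ψ => .untl (nnf true φ) (nnf true ψ)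
  | false, .untl φ ψ =>
      .or (.glob (nnf false ψ)) (.untl (nnf false ψ) (.and (nnf false φ) (nnf false ψ)))

/-- `ψ_back`: replace each constraint `c` by `back(c)` and take negation normal form. -/
def backF (ψ : Formula V sortOf) : Formula V sortOf :=
  nnf true (ψ.mapAtoms backC)

end Back

section Automata

variable {V : Type} {sortOf : V → VSort}

/-- Letters of the extended alphabet `Σ_λ`: constraints, plus the
last-instant marker `λ` and its negation. -/
inductive Lit (V : Type) (sortOf : V → VSort) where
  | c (c : Constraint V sortOf)
  | lam
  | nlam

/-- Symbols: sets of letters. -/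
abbrev Sym (V : Type) (sortOf : V → VSort) : Type := Set (Lit V sortOf)

/-- Constraint part of a symbol. -/
def constrOf (ς : Sym V sortOf) : Set (Constraint V sortOf) := {c | Lit.c c ∈ ς}

/-- Satisfiability of a set of constraints. -/
def SatC (S : Set (Constraint V sortOf)) : Prop :=
  ∃ σ : (v : V) → ℤ → Dom (sortOf v), ∀ c ∈ S, c.holds σ

/-- A symbol in `Σ_λ` is satisfiable if it does not contain both `λ` and `¬λ`
and its constraints are jointly satisfiable. -/
def SatSym (ς : Sym V sortOf) : Prop :=
  ¬ (Lit.lam ∈ ς ∧ Lit.nlam ∈ ς) ∧ SatC (constrOf ς)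

/-- `R₁ ⊗ R₂`. -/
def owedge (R₁ R₂ : Set (Formula V sortOf × Sym V sortOf)) :
    Set (Formula V sortOf × Sym V sortOf) :=
  {p | ∃ χ₁ ς₁ χ₂ ς₂, (χ₁, ς₁) ∈ R₁ ∧ (χ₂, ς₂) ∈ R₂ ∧ SatSym (ς₁ ∪ ς₂) ∧
        p = (Formula.and χ₁ χ₂, ς₁ ∪ ς₂)}

/-- `R₁ ⊕ R₂`. -/
def ovee (R₁ R₂ : Set (Formula V sortOf × Sym V sortOf)) :
    Set (Formula V sortOf × Sym V sortOf) :=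
  {p | ∃ χ₁ ς₁ χ₂ ς₂, (χ₁, ς₁) ∈ R₁ ∧ (χ₂, ς₂) ∈ R₂ ∧ SatSym (ς₁ ∪ ς₂) ∧
        p = (Formula.or χ₁ χ₂, ς₁ ∪ ς₂)}

/-- The transition function `δ` of the automata construction. -/
def delta : Formula V sortOf → Set (Formula V sortOf × Sym V sortOf)
  | .tt => {(.tt, ∅)}
  | .ff => {(.ff, ∅)}
  | .atom c => {(.tt, {Lit.c c}), (.ff, {Lit.c c.neg})}
  | .not φ =>
      match φ with
      | .atom c => {(.ff, {Lit.c c}), (.tt, {Lit.c c.neg})}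
      | _ => ∅
  | .and φ ψ => owedge (delta φ) (delta ψ)
  | .or φ ψ => ovee (delta φ) (delta ψ)
  | .nextS φ => {(φ, {Lit.nlam}), (.ff, {Lit.lam})}
  | .nextW φ => {(φ, {Lit.nlam}), (.tt, {Lit.lam})}
  | .glob φ => owedge (delta φ) {(.glob φ, {Lit.nlam}), (.tt, {Lit.lam})}
  | .untl φ ψ =>
      ovee (delta ψ) (owedge (delta φ) {(.untl φ ψ, {Lit.nlam}), (.ff, {Lit.lam})})

/-- Iterated `δ`. -/
def deltaStar : List (Sym V sortOf) → Formula V sortOf → Set (Formula V sortOf)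
  | [], φ => {φ}
  | ς :: w, φ => {χ | ∃ φ', (φ', ς) ∈ delta φ ∧ χ ∈ deltaStar w φ'}

/-- States of the NFA `N_{ψ_back}`: formulas, plus the distinguished
final state `q₊` and non-final state `q₋`. -/
inductive NState (V : Type) (sortOf : V → VSort) where
  | fm (φ : Formula V sortOf)
  | plus
  | minus

/-- The transition relation `ϱ` of the NFA, obtained from `δ` by removing
the `λ` markers. -/
inductive NTrans : NState V sortOf → Sym V sortOf → NState V sortOf → Prop where
  | nolam {φ φ' : Formula V sortOf} {ς : Sym V sortOf} :
      (φ', ς) ∈ delta φ → Lit.lam ∉ ς →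
      NTrans (.fm φ) (ς \ {Lit.nlam}) (.fm φ')
  | toPlus {φ : Formula V sortOf} {ς : Sym V sortOf} :
      (Formula.tt, ς) ∈ delta φ → Lit.lam ∈ ς →
      NTrans (.fm φ) (ς \ {Lit.lam}) .plus
  | toMinus {φ : Formula V sortOf} {ς : Sym V sortOf} :
      (Formula.ff, ς) ∈ delta φ → Lit.lam ∈ ς →
      NTrans (.fm φ) (ς \ {Lit.lam}) .minus

/-- Multi-step runs of the NFA. -/
inductive NSteps : NState V sortOf → List (Sym V sortOf) → NState V sortOf → Prop where
  | refl (q : NState V sortOf) : NSteps q [] q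
  | step {q q' q'' : NState V sortOf} {ς : Sym V sortOf} {w : List (Sym V sortOf)} :
      NTrans q ς q' → NSteps q' w q'' → NSteps q (ς :: w) q''

/-- The NFA for `ψb` (initial state `ψb`) accepts the word `w`. -/
def NAccepts (ψb : Formula V sortOf) (w : List (Sym V sortOf)) : Prop :=
  ∃ q' : NState V sortOf, NSteps (.fm ψb) w q' ∧ (q' = NState.fm .tt ∨ q' = NState.plus)

/-- `C± = C ∪ {neg c | c ∈ C}`. -/
def withNegs (Cs : Set (Constraint V sortOf)) : Set (Constraint V sortOf) :=
  Cs ∪ Constraint.neg '' Cs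

/-- A symbol belongs to the alphabet `Σ = 2^{C±}` (only constraint letters, from `C±`). -/
def InSigma (Cs : Set (Constraint V sortOf)) (ς : Sym V sortOf) : Prop :=
  ∀ l ∈ ς, ∃ c ∈ withNegs Cs, l = Lit.c c

/-- A word over `Σ_λ`/`Σ` is well-formed if its first symbol mentions
no `pre` variables. -/
def WellFormedW : List (Sym V sortOf) → Prop
  | [] => False
  | ς₀ :: _ => ∀ c ∈ constrOf ς₀, ¬ MentionsPre c

/-- Consistency of a word of symbols with a trace. -/
def ConsistentL (w : List (Sym V sortOf)) (τ : Trace V sortOf) : Prop :=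
  w.length = τ.length ∧
  ∀ i, i < w.length → ∀ c ∈ constrOf (w.getD i ∅), c.holds (traceVal τ i)

/-- Consistency of a word of constraint sets with a trace. -/
def ConsistentC (w : List (Set (Constraint V sortOf))) (τ : Trace V sortOf) : Prop :=
  w.length = τ.length ∧
  ∀ i, i < w.length → ∀ c ∈ w.getD i ∅, c.holds (traceVal τ i)

/-- λ-consistency of a symbol with instant `i` of a trace. -/
def LamCons (ς : Sym V sortOf) (τ : Trace V sortOf) (i : ℕ) : Prop :=
  ((i < τ.length - 1 ∧ Lit.lam ∉ ς) ∨ (i = τ.length - 1 ∧ Lit.nlam ∉ ς)) ∧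
  (if i = 0 then
    (∀ c ∈ constrOf ς, ¬ MentionsPre c) ∧ ∀ c ∈ constrOf ς, c.holds (traceVal τ 0)
  else
    ∀ c ∈ constrOf ς, c.holds (traceVal τ i))

/-- Membership in `L_back`: negation normal form over constraints on
`V_pre ∪ V_cur`. -/
def IsLB : Formula V sortOf → Prop
  | .atom c => OnlyPC c
  | .not φ => match φ with
      | .atom c => OnlyPC c
      | _ => False
  | .and φ ψ => IsLB φ ∧ IsLB ψ
  | .or φ ψ => IsLB φ ∧ IsLB ψ
  | .nextS φ => IsLB φ
  | .nextW φ => IsLB φ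
  | .glob φ => IsLB φ
  | .untl φ ψ => IsLB φ ∧ IsLB ψ
  | _ => False

/-- Safe lookback. -/
def SafeLB : Formula V sortOf → Prop
  | .tt => True
  | .ff => True
  | .atom c => ¬ MentionsPre c
  | .not φ => SafeLB φ
  | .and φ ψ => SafeLB φ ∧ SafeLB ψ
  | .or φ ψ => SafeLB φ ∧ SafeLB ψ
  | .nextS _ => True
  | .nextW _ => True
  | .glob φ => SafeLB φ
  | .untl φ ψ => SafeLB φ ∧ SafeLB ψ

end Automata

section DFA

variable {V : Type} {sortOf : V → VSort}

/-- `ThetaOf Cs`: the maximal satisfiable subsets of `Cs±`. -/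
def ThetaOf (Cs : Set (Constraint V sortOf)) : Set (Set (Constraint V sortOf)) :=
  {ς | ς ⊆ withNegs Cs ∧ SatC ς ∧ ∀ c ∈ withNegs Cs, SatC (insert c ς) → c ∈ ς}

/-- `Θ_cur`: maximal satisfiable subsets of `C_cur±`, with `C_cur` the
constraints of `Cs` mentioning only `cur` variables. -/
def ThetaCur (Cs : Set (Constraint V sortOf)) : Set (Set (Constraint V sortOf)) :=
  ThetaOf {c ∈ Cs | OnlyCur c}

/-- A word in `Θ_cur Θ*`. -/
def ThWord (Cs : Set (Constraint V sortOf)) (w : List (Set (Constraint V sortOf))) :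
    Prop :=
  ∃ ς₀ w', w = ς₀ :: w' ∧ ς₀ ∈ ThetaCur Cs ∧ ∀ ς ∈ w', ς ∈ ThetaOf Cs

/-- States of the DFA: sets of NFA states (subset construction). -/
abbrev DState (V : Type) (sortOf : V → VSort) : Type := Set (NState V sortOf)

/-- Initial DFA state `{q₀}`. -/
def q0 (ψb : Formula V sortOf) : DState V sortOf := {NState.fm ψb}

/-- The transition function `Δ` of the subset construction. -/
def DeltaT (P : DState V sortOf) (ς : Set (Constraint V sortOf)) : DState V sortOf :=
  {q' | ∃ q ∈ P, ∃ ς' : Sym V sortOf, NTrans q ς' q' ∧ ∀ l ∈ ς', ∃ c ∈ ς, l = Lit.c c}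

/-- One DFA step: from the initial state `{q₀}` on symbols of `Θ_cur`, from other
states on symbols of `Θ`. -/
def DTrans (ψb : Formula V sortOf) (P : DState V sortOf)
    (ς : Set (Constraint V sortOf)) (P' : DState V sortOf) : Prop :=
  ((P = q0 ψb ∧ ς ∈ ThetaCur ψb.constraints) ∨
   (P ≠ q0 ψb ∧ ς ∈ ThetaOf ψb.constraints)) ∧
  P' = DeltaT P ς

/-- Multi-step runs of the DFA: `P →*_w P'`. -/
inductive DSteps (ψb : Formula V sortOf) :
    DState V sortOf → List (Set (Constraint V sortOf)) → DState V sortOf → Prop where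
  | refl (P : DState V sortOf) : DSteps ψb P [] P
  | step {P P' P'' : DState V sortOf} {ς : Set (Constraint V sortOf)}
      {w : List (Set (Constraint V sortOf))} :
      DTrans ψb P ς P' → DSteps ψb P' w P'' → DSteps ψb P (ς :: w) P''

/-- Final (accepting) DFA states. -/
def DFinal (P : DState V sortOf) : Prop :=
  NState.fm Formula.tt ∈ P ∨ NState.plus ∈ P

/-- `P'` is reachable from `P` in the DFA. -/
def DReach (ψb : Formula V sortOf) (P P' : DState V sortOf) : Prop :=
  ∃ w, DSteps ψb P w P'

/-- The DFA for `ψb` accepts the word `w`. -/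
def DAccepts (ψb : Formula V sortOf) (w : List (Set (Constraint V sortOf))) : Prop :=
  ∃ P : DState V sortOf, DSteps ψb (q0 ψb) w P ∧ DFinal P

end DFA

section History

variable {V : Type} {sortOf : V → VSort}

/-- Semantic formulas with free variables `V₀ ∪ V` (quantifier elimination lets
us identify history constraints with their sets of models): the first argument
is the assignment of the `V₀`-copies, the second that of `V`. -/
abbrev HF (V : Type) (sortOf : V → VSort) : Type :=
  Assign V sortOf → Assign V sortOf → Prop

/-- Valuation reading `cur` variables in `a` and `pre` variables in `u`. -/
def pairVal (u a : Assign V sortOf) : (v : V) → ℤ → Dom (sortOf v) :=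
  fun v j => if j = 0 then a v else if j = -1 then u v else default

/-- `φ_init = ⋀_{v ∈ V} v = v₀`. -/
def hinit : HF V sortOf := fun a₀ a => ∀ v, a₀ v = a v

/-- `update(φ, C') = ∃Ū. φ(Ū) ∧ ⋀ C'(Ū, V̄)`. -/
def updateH (φ : HF V sortOf) (ς : Set (Constraint V sortOf)) : HF V sortOf :=
  fun a₀ a => ∃ u : Assign V sortOf, φ a₀ u ∧ ∀ c ∈ ς, c.holds (pairVal u a)

/-- The history constraint `h(w)`. -/
def histC (w : List (Set (Constraint V sortOf))) : HF V sortOf :=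
  w.foldl updateH hinit

/-- Logical equivalence of semantic formulas. -/
def HFEquiv (φ χ : HF V sortOf) : Prop := ∀ a₀ a, φ a₀ a ↔ χ a₀ a

/-- Satisfiability of a semantic formula. -/
def HSat (φ : HF V sortOf) : Prop := ∃ a₀ a, φ a₀ a

/-- The defining property of a history set for the DFA of `ψb`. -/
def HistProp (ψb : Formula V sortOf) (Φ : Set (DState V sortOf × HF V sortOf)) : Prop :=
  ∀ (P' : DState V sortOf) (w : List (Set (Constraint V sortOf))),
    ThWord ψb.constraints w → DSteps ψb (q0 ψb) w P' →
    ∃ φ, (P', φ) ∈ Φ ∧ HFEquiv (histC w) φ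

/-- A history set: a minimal set with the above property. -/
def IsHistorySet (ψb : Formula V sortOf)
    (Φ : Set (DState V sortOf × HF V sortOf)) : Prop :=
  HistProp ψb Φ ∧ ∀ Φ' ⊆ Φ, HistProp ψb Φ' → Φ' = Φ

/-- A summary `(Φ, ∼)` for the DFA of `ψb`. -/
structure Summary (ψb : Formula V sortOf) where
  Phi : Set (DState V sortOf × HF V sortOf)
  sim : HF V sortOf → HF V sortOf → Prop
  hist : IsHistorySet ψb Phi
  equiv : Equivalence sim
  contains_equiv : ∀ φ χ : HF V sortOf,
    (∃ q, (q, φ) ∈ Phi) → (∃ q, (q, χ) ∈ Phi) → HFEquiv φ χ → sim φ χ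
  cond_a : ∀ (q : DState V sortOf) (φ χ : HF V sortOf),
    (q, φ) ∈ Phi → (q, χ) ∈ Phi → sim φ χ →
    ∀ a₀ a, φ a₀ a → ∃ a', χ a₀ a'
  cond_b : ∀ (q : DState V sortOf) (φ χ : HF V sortOf),
    (q, φ) ∈ Phi → (q, χ) ∈ Phi → sim φ χ →
    ∀ ς q', DTrans ψb q ς q' → sim (updateH φ ς) (updateH χ ς)

/-- The summary is finite: `∼` has finitely many classes on `Φ`. -/
def FiniteSummary {ψb : Formula V sortOf} (S : Summary ψb) : Prop :=
  ∃ R : Set (HF V sortOf), R.Finite ∧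
    ∀ q φ, (q, φ) ∈ S.Phi → ∃ χ ∈ R, S.sim φ χ

/-- A constraint graph `CG_ψ(P₀, ∼)`: the inductively generated graph whose
nodes pair DFA states with (∼-representatives of) history formulas. -/
structure CGraph (ψb : Formula V sortOf) (P₀ : DState V sortOf)
    (sim : HF V sortOf → HF V sortOf → Prop) where
  nodes : Set (DState V sortOf × HF V sortOf)
  edge : (DState V sortOf × HF V sortOf) → Set (Constraint V sortOf) →
         (DState V sortOf × HF V sortOf) → Prop
  init_mem : (P₀, hinit) ∈ nodes
  edge_mem : ∀ n ς n', edge n ς n' → n ∈ nodes ∧ n' ∈ nodes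
  edge_sound : ∀ n ς n', edge n ς n' →
    DTrans ψb n.1 ς n'.1 ∧ HSat (updateH n.2 ς) ∧ sim n'.2 (updateH n.2 ς)
  closed : ∀ n ∈ nodes, ∀ ς (P' : DState V sortOf),
    DTrans ψb n.1 ς P' → HSat (updateH n.2 ς) → ∃ φ', edge n ς (P', φ')
  minimal : ∀ n ∈ nodes,
    Relation.ReflTransGen (fun a b => ∃ ς, edge a ς b) (P₀, hinit) n

/-- Paths in a constraint graph, labeled by words. -/
inductive CGSteps {ψb : Formula V sortOf} {P₀ : DState V sortOf}
    {sim : HF V sortOf → HF V sortOf → Prop} (G : CGraph ψb P₀ sim) :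
    (DState V sortOf × HF V sortOf) → List (Set (Constraint V sortOf)) →
    (DState V sortOf × HF V sortOf) → Prop where
  | refl (n : DState V sortOf × HF V sortOf) : CGSteps G n [] n
  | step {n n' n'' : DState V sortOf × HF V sortOf}
      {ς : Set (Constraint V sortOf)} {w : List (Set (Constraint V sortOf))} :
      G.edge n ς n' → CGSteps G n' w n'' → CGSteps G n (ς :: w) n''

/-- `α ⊨ FSat(G)(V̄)`: some final node's formula is satisfiable with its
`V₀`-part set to `α`. -/
def FSatAt {ψb : Formula V sortOf} {P₀ : DState V sortOf}
    {sim : HF V sortOf → HF V sortOf → Prop} (G : CGraph ψb P₀ sim)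
    (α : Assign V sortOf) : Prop :=
  ∃ n ∈ G.nodes, DFinal n.1 ∧ ∃ b, n.2 α b

/-- `α ⊨ FUns(G)(V̄)`: dually, with non-final nodes. -/
def FUnsAt {ψb : Formula V sortOf} {P₀ : DState V sortOf}
    {sim : HF V sortOf → HF V sortOf → Prop} (G : CGraph ψb P₀ sim)
    (α : Assign V sortOf) : Prop :=
  ∃ n ∈ G.nodes, ¬ DFinal n.1 ∧ ∃ b, n.2 α b

end History

section Aux

variable {V : Type} {sortOf : V → VSort}

lemma Expr.hasVar_shift {s : VSort} {e : Expr V sortOf s} {d : ℤ} {v : V} {i : ℤ}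
    (h : (e.shift d).HasVar v i) : ∃ j, e.HasVar v j ∧ i = j + d := by
  induction e with
  | var w j => exact ⟨j, ⟨h.1, rfl⟩, h.2.symm⟩
  | const k => exact absurd h id
  | add e₁ e₂ ih₁ ih₂ =>
    rcases h with h | h
    · obtain ⟨j, hj, hi⟩ := ih₁ h; exact ⟨j, Or.inl hj, hi⟩
    · obtain ⟨j, hj, hi⟩ := ih₂ h; exact ⟨j, Or.inr hj, hi⟩
  | smul k e ih => obtain ⟨j, hj, hi⟩ := ih h; exact ⟨j, hj, hi⟩

lemma Expr.noLook {s : VSort} {e : Expr V sortOf s} {v : V} {j : ℤ}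
    (h : e.hasLook = false) (hv : e.HasVar v j) : j = 0 := by
  induction e with
  | var w i =>
    simp only [Expr.hasLook, bne_eq_false_iff_eq] at h
    exact hv.2 ▸ h
  | const k => exact absurd hv id
  | add e₁ e₂ ih₁ ih₂ =>
    simp only [Expr.hasLook, Bool.or_eq_false_iff] at h
    rcases hv with hv | hv
    · exact ih₁ h.1 hv
    · exact ih₂ h.2 hv
  | smul k e ih => exact ih h hv

lemma Constraint.hasVar_shift {c : Constraint V sortOf} {d : ℤ} {v : V} {i : ℤ}
    (h : (c.shift d).HasVar v i) : ∃ j, c.HasVar v j ∧ i = j + d := by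
  cases c <;>
    (rcases h with h | h
     · obtain ⟨j, hj, hi⟩ := Expr.hasVar_shift h; exact ⟨j, Or.inl hj, hi⟩
     · obtain ⟨j, hj, hi⟩ := Expr.hasVar_shift h; exact ⟨j, Or.inr hj, hi⟩)

lemma Constraint.noLook {c : Constraint V sortOf} {v : V} {j : ℤ}
    (h : c.hasLook = false) (hv : c.HasVar v j) : j = 0 := by
  cases c <;>
    (simp only [Constraint.hasLook, Bool.or_eq_false_iff] at h
     rcases hv with hv | hv
     · exact Expr.noLook h.1 hv
     · exact Expr.noLook h.2 hv)

lemma Constraint.hasVar_neg {c : Constraint V sortOf} {v : V} {j : ℤ} :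
    c.neg.HasVar v j ↔ c.HasVar v j := by
  cases c <;> simp [Constraint.neg, Constraint.HasVar, or_comm]

lemma Constraint.neg_neg (c : Constraint V sortOf) : c.neg.neg = c := by
  cases c <;> rfl

lemma Constraint.holds_neg_of_not {c : Constraint V sortOf}
    {σ : (v : V) → ℤ → Dom (sortOf v)} (h : ¬ c.holds σ) : c.neg.holds σ := by
  cases c with
  | eq e₁ e₂ => exact h
  | ne e₁ e₂ => exact not_not.mp h
  | lt e₁ e₂ => exact not_lt.mp h
  | le e₁ e₂ => exact not_le.mp h
  | cong n e₁ e₂ => exact h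
  | ncong n e₁ e₂ => exact not_not.mp h

lemma Constraint.not_holds_both {c : Constraint V sortOf}
    {σ : (v : V) → ℤ → Dom (sortOf v)} (h : c.holds σ) (h' : c.neg.holds σ) : False := by
  cases c with
  | eq e₁ e₂ => exact h' h
  | ne e₁ e₂ => exact h h'
  | lt e₁ e₂ => exact absurd h (not_lt.mpr h')
  | le e₁ e₂ => exact absurd h' (not_lt.mpr h)
  | cong n e₁ e₂ => exact h' h
  | ncong n e₁ e₂ => exact h h'

lemma mentionsPre_neg {c : Constraint V sortOf} (h : ¬ MentionsPre c) :
    ¬ MentionsPre c.neg := by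
  rintro ⟨v, j, hj, hv⟩
  exact h ⟨v, j, hj, Constraint.hasVar_neg.mp hv⟩

lemma onlyPC_neg {c : Constraint V sortOf} (h : OnlyPC c) : OnlyPC c.neg :=
  fun v j hv => h v j (Constraint.hasVar_neg.mp hv)

lemma onlyCur_neg {c : Constraint V sortOf} (h : OnlyCur c) : OnlyCur c.neg :=
  fun v j hv => h v j (Constraint.hasVar_neg.mp hv)

lemma onlyCur_of_onlyPC {c : Constraint V sortOf} (h : OnlyPC c)
    (h' : ¬ MentionsPre c) : OnlyCur c := by
  intro v j hv
  rcases h v j hv with h0 | hm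
  · exact h0
  · exact absurd ⟨v, j, by omega, hv⟩ h'

lemma onlyCur_not_mentionsPre {c : Constraint V sortOf} (h : OnlyCur c) :
    ¬ MentionsPre c := by
  rintro ⟨v, j, hj, hv⟩
  exact absurd (h v j hv) (by omega)

end Aux
section Aux2

variable {V : Type} {sortOf : V → VSort}

lemma withNegs_mono {Cs Cs' : Set (Constraint V sortOf)} (h : Cs ⊆ Cs') :
    withNegs Cs ⊆ withNegs Cs' := by
  rintro c (hc | ⟨d, hd, rfl⟩)
  · exact Or.inl (h hc)
  · exact Or.inr ⟨d, h hd, rfl⟩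

lemma withNegs_neg_mem {Cs : Set (Constraint V sortOf)} {c : Constraint V sortOf}
    (h : c ∈ withNegs Cs) : c.neg ∈ withNegs Cs := by
  rcases h with hc | ⟨d, hd, rfl⟩
  · exact Or.inr ⟨c, hc, rfl⟩
  · exact Or.inl (by rw [Constraint.neg_neg]; exact hd)

lemma mem_withNegs_cur_onlyCur {Cs : Set (Constraint V sortOf)} {c : Constraint V sortOf}
    (h : c ∈ withNegs {c ∈ Cs | OnlyCur c}) : OnlyCur c := by
  rcases h with hc | ⟨d, hd, rfl⟩
  · exact hc.2
  · exact onlyCur_neg hd.2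

lemma mem_withNegs_onlyPC {Cs : Set (Constraint V sortOf)}
    (hCs : ∀ c ∈ Cs, OnlyPC c) {c : Constraint V sortOf}
    (h : c ∈ withNegs Cs) : OnlyPC c := by
  rcases h with hc | ⟨d, hd, rfl⟩
  · exact hCs c hc
  · exact onlyPC_neg (hCs d hd)

/-- The maximal satisfiable subset of `Cs±` determined by an assignment. -/
def maxSet (Cs : Set (Constraint V sortOf)) (σ : (v : V) → ℤ → Dom (sortOf v)) :
    Set (Constraint V sortOf) :=
  {c | c ∈ withNegs Cs ∧ c.holds σ}

lemma maxSet_mem_theta (Cs : Set (Constraint V sortOf))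
    (σ : (v : V) → ℤ → Dom (sortOf v)) : maxSet Cs σ ∈ ThetaOf Cs := by
  refine ⟨fun c hc => hc.1, ⟨σ, fun c hc => hc.2⟩, ?_⟩
  intro c hc hsat
  by_contra hnot
  have hch : ¬ c.holds σ := fun hh => hnot ⟨hc, hh⟩
  have hneg : c.neg ∈ maxSet Cs σ :=
    ⟨withNegs_neg_mem hc, Constraint.holds_neg_of_not hch⟩
  obtain ⟨σ', hσ'⟩ := hsat
  exact Constraint.not_holds_both (hσ' c (Set.mem_insert _ _))
    (hσ' c.neg (Set.mem_insert_of_mem _ hneg))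

lemma maxSet_holds {Cs : Set (Constraint V sortOf)} {σ : (v : V) → ℤ → Dom (sortOf v)}
    {c : Constraint V sortOf} (h : c ∈ maxSet Cs σ) : c.holds σ := h.2

lemma mem_maxSet {Cs : Set (Constraint V sortOf)} {σ : (v : V) → ℤ → Dom (sortOf v)}
    {c : Constraint V sortOf} (h1 : c ∈ withNegs Cs) (h2 : c.holds σ) :
    c ∈ maxSet Cs σ := ⟨h1, h2⟩

lemma hasVar_of_mem_constraints {φ : Formula V sortOf} {c : Constraint V sortOf}
    (h : c ∈ φ.constraints) {v : V} {j : ℤ} (hv : c.HasVar v j) : φ.HasVar v j := by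
  induction φ with
  | tt => exact absurd h (Set.notMem_empty c)
  | ff => exact absurd h (Set.notMem_empty c)
  | atom c' =>
    simp only [Formula.constraints, Set.mem_singleton_iff] at h
    cases h; exact hv
  | and φ ψ ihφ ihψ => rcases h with h | h; exacts [Or.inl (ihφ h), Or.inr (ihψ h)]
  | or φ ψ ihφ ihψ => rcases h with h | h; exacts [Or.inl (ihφ h), Or.inr (ihψ h)]
  | not φ ih => exact ih h
  | nextS φ ih => exact ih h
  | nextW φ ih => exact ih h
  | glob φ ih => exact ih h
  | untl φ ψ ihφ ihψ => rcases h with h | h; exacts [Or.inl (ihφ h), Or.inr (ihψ h)]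

lemma constraints_nnf {φ : Formula V sortOf} {b : Bool} :
    (nnf b φ).constraints ⊆ φ.constraints := by
  induction φ generalizing b with
  | tt => cases b <;> simp [nnf, Formula.constraints]
  | ff => cases b <;> simp [nnf, Formula.constraints]
  | atom c => cases b <;> simp [nnf, Formula.constraints]
  | and φ ψ ihφ ihψ =>
    cases b <;> simp only [nnf, Formula.constraints] <;>
      exact Set.union_subset_union ihφ ihψ
  | or φ ψ ihφ ihψ =>
    cases b <;> simp only [nnf, Formula.constraints] <;>
      exact Set.union_subset_union ihφ ihψ
  | not φ ih => cases b <;> simpa [nnf, Formula.constraints] using ih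
  | nextS φ ih => cases b <;> simpa [nnf, Formula.constraints] using ih
  | nextW φ ih => cases b <;> simpa [nnf, Formula.constraints] using ih
  | glob φ ih =>
    cases b <;> simp only [nnf, Formula.constraints]
    · simpa using ih
    · exact ih
  | untl φ ψ ihφ ihψ =>
    cases b <;> simp only [nnf, Formula.constraints]
    · intro c hc
      rcases hc with hc | hc | hc | hc
      · exact Or.inr (ihψ hc)
      · exact Or.inr (ihψ hc)
      · exact Or.inl (ihφ hc)
      · exact Or.inr (ihψ hc)
    · exact Set.union_subset_union ihφ ihψ

lemma constraints_mapAtoms_backC {ψ : Formula V sortOf} {c' : Constraint V sortOf}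
    (h : c' ∈ (Formula.mapAtoms backC ψ).constraints) :
    ∃ c ∈ ψ.constraints, (c' = c ∧ c.hasLook = false) ∨ c' = c.shift (-1) := by
  induction ψ with
  | tt => exact absurd h (Set.notMem_empty c')
  | ff => exact absurd h (Set.notMem_empty c')
  | atom c =>
    by_cases hl : c.hasLook
    · simp only [Formula.mapAtoms, backC, hl, if_pos, Formula.constraints,
        Set.mem_singleton_iff] at h
      exact ⟨c, rfl, Or.inr h⟩
    · simp only [Formula.mapAtoms, backC, hl, if_neg, Formula.constraints,
        Set.mem_singleton_iff] at h
      exact ⟨c, rfl, Or.inl ⟨h, by simpa using hl⟩⟩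
  | and φ ψ ihφ ihψ =>
    rcases h with h | h
    · obtain ⟨c, hc, hh⟩ := ihφ h; exact ⟨c, Or.inl hc, hh⟩
    · obtain ⟨c, hc, hh⟩ := ihψ h; exact ⟨c, Or.inr hc, hh⟩
  | or φ ψ ihφ ihψ =>
    rcases h with h | h
    · obtain ⟨c, hc, hh⟩ := ihφ h; exact ⟨c, Or.inl hc, hh⟩
    · obtain ⟨c, hc, hh⟩ := ihψ h; exact ⟨c, Or.inr hc, hh⟩
  | not φ ih => exact ih h
  | nextS φ ih => exact ih h
  | nextW φ ih => exact ih h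
  | glob φ ih => exact ih h
  | untl φ ψ ihφ ihψ =>
    rcases h with h | h
    · obtain ⟨c, hc, hh⟩ := ihφ h; exact ⟨c, Or.inl hc, hh⟩
    · obtain ⟨c, hc, hh⟩ := ihψ h; exact ⟨c, Or.inr hc, hh⟩

lemma backF_onlyPC {ψ : Formula V sortOf} (h1 : LookaheadLe ψ 1) :
    ∀ c ∈ (backF ψ).constraints, OnlyPC c := by
  intro c' hc'
  obtain ⟨c, hc, hh⟩ := constraints_mapAtoms_backC (constraints_nnf hc')
  rcases hh with ⟨rfl, hl⟩ | rfl
  · intro v j hv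
    exact Or.inl (Constraint.noLook hl hv)
  · intro v j hv
    obtain ⟨j₀, hj₀, rfl⟩ := Constraint.hasVar_shift hv
    have := h1 v j₀ (hasVar_of_mem_constraints hc hj₀)
    omega

lemma safeLB_nnf {φ : Formula V sortOf} (h : SafeLB φ) (b : Bool) :
    SafeLB (nnf b φ) := by
  induction φ generalizing b with
  | tt => cases b <;> trivial
  | ff => cases b <;> trivial
  | atom c => cases b <;> exact h
  | and φ ψ ihφ ihψ => cases b <;> exact ⟨ihφ h.1 _, ihψ h.2 _⟩
  | or φ ψ ihφ ihψ => cases b <;> exact ⟨ihφ h.1 _, ihψ h.2 _⟩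
  | not φ ih => cases b <;> exact ih h _
  | nextS φ ih => cases b <;> trivial
  | nextW φ ih => cases b <;> trivial
  | glob φ ih =>
    cases b
    · exact ⟨trivial, ih h _⟩
    · exact ih h _
  | untl φ ψ ihφ ihψ =>
    cases b
    · exact ⟨ihψ h.2 _, ihψ h.2 _, ihφ h.1 _, ihψ h.2 _⟩
    · exact ⟨ihφ h.1 _, ihψ h.2 _⟩
  -- marker

lemma safeLB_mapAtoms_backC (ψ : Formula V sortOf) :
    SafeLB (Formula.mapAtoms backC ψ) := by
  induction ψ with
  | tt => trivial
  | ff => trivial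
  | atom c =>
    by_cases hl : c.hasLook
    · simp only [Formula.mapAtoms, backC, hl, if_pos]; trivial
    · simp only [Formula.mapAtoms, backC, hl, if_neg]
      rintro ⟨v, j, hj, hv⟩
      have := Constraint.noLook (by simpa using hl) hv
      omega
  | and φ ψ ihφ ihψ => exact ⟨ihφ, ihψ⟩
  | or φ ψ ihφ ihψ => exact ⟨ihφ, ihψ⟩
  | not φ ih => exact ih
  | nextS φ ih => trivial
  | nextW φ ih => trivial
  | glob φ ih => exact ih
  | untl φ ψ ihφ ihψ => exact ⟨ihφ, ihψ⟩

lemma backF_safe (ψ : Formula V sortOf) : SafeLB (backF ψ) :=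
  safeLB_nnf (safeLB_mapAtoms_backC ψ) true

end Aux2
section Aux3

variable {V : Type} {sortOf : V → VSort}

lemma delta_not_both {φ χ : Formula V sortOf} {ς : Sym V sortOf}
    (h : (χ, ς) ∈ delta φ) : ¬ (Lit.lam ∈ ς ∧ Lit.nlam ∈ ς) := by
  cases φ with
  | tt => simp only [delta, Set.mem_singleton_iff, Prod.mk.injEq] at h
          rcases h with ⟨_, rfl⟩; simp
  | ff => simp only [delta, Set.mem_singleton_iff, Prod.mk.injEq] at h
          rcases h with ⟨_, rfl⟩; simp
  | atom c =>
    simp only [delta, Set.mem_insert_iff, Set.mem_singleton_iff, Prod.mk.injEq] at h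
    rcases h with ⟨_, rfl⟩ | ⟨_, rfl⟩ <;> simp
  | not φ =>
    cases φ <;> simp only [delta] at h <;> try exact absurd h (Set.notMem_empty _)
    case atom c =>
      simp only [Set.mem_insert_iff, Set.mem_singleton_iff, Prod.mk.injEq] at h
      rcases h with ⟨_, rfl⟩ | ⟨_, rfl⟩ <;> simp
  | and φ ψ =>
    obtain ⟨χ₁, ς₁, χ₂, ς₂, _, _, hs, heq⟩ := h
    rw [Prod.mk.injEq] at heq
    exact heq.2 ▸ hs.1
  | or φ ψ =>
    obtain ⟨χ₁, ς₁, χ₂, ς₂, _, _, hs, heq⟩ := h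
    rw [Prod.mk.injEq] at heq
    exact heq.2 ▸ hs.1
  | nextS φ =>
    simp only [delta, Set.mem_insert_iff, Set.mem_singleton_iff, Prod.mk.injEq] at h
    rcases h with ⟨_, rfl⟩ | ⟨_, rfl⟩ <;> simp
  | nextW φ =>
    simp only [delta, Set.mem_insert_iff, Set.mem_singleton_iff, Prod.mk.injEq] at h
    rcases h with ⟨_, rfl⟩ | ⟨_, rfl⟩ <;> simp
  | glob φ =>
    obtain ⟨χ₁, ς₁, χ₂, ς₂, _, _, hs, heq⟩ := h
    rw [Prod.mk.injEq] at heq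
    exact heq.2 ▸ hs.1
  | untl φ ψ =>
    obtain ⟨χ₁, ς₁, χ₂, ς₂, _, _, hs, heq⟩ := h
    rw [Prod.mk.injEq] at heq
    exact heq.2 ▸ hs.1

lemma delta_constr {φ χ : Formula V sortOf} {ς : Sym V sortOf}
    (h : (χ, ς) ∈ delta φ) {c : Constraint V sortOf} (hc : Lit.c c ∈ ς) :
    c ∈ withNegs φ.constraints := by
  induction φ generalizing χ ς with
  | tt =>
    simp only [delta, Set.mem_singleton_iff, Prod.mk.injEq] at h
    rcases h with ⟨_, rfl⟩; exact absurd hc (Set.notMem_empty _)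
  | ff =>
    simp only [delta, Set.mem_singleton_iff, Prod.mk.injEq] at h
    rcases h with ⟨_, rfl⟩; exact absurd hc (Set.notMem_empty _)
  | atom c' =>
    simp only [delta, Set.mem_insert_iff, Set.mem_singleton_iff, Prod.mk.injEq] at h
    rcases h with ⟨_, rfl⟩ | ⟨_, rfl⟩ <;>
      simp only [Set.mem_singleton_iff, Lit.c.injEq] at hc <;> subst hc
    · exact Or.inl rfl
    · exact Or.inr ⟨c', rfl, rfl⟩
  | not φ ih =>
    cases φ <;> simp only [delta] at h <;> try exact absurd h (Set.notMem_empty _)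
    case atom c' =>
      simp only [Set.mem_insert_iff, Set.mem_singleton_iff, Prod.mk.injEq] at h
      rcases h with ⟨_, rfl⟩ | ⟨_, rfl⟩ <;>
        simp only [Set.mem_singleton_iff, Lit.c.injEq] at hc <;> subst hc
      · exact Or.inl rfl
      · exact Or.inr ⟨c', rfl, rfl⟩
  | and φ ψ ihφ ihψ =>
    obtain ⟨χ₁, ς₁, χ₂, ς₂, h₁, h₂, _, heq⟩ := h
    rw [Prod.mk.injEq] at heq
    rcases heq.2 ▸ hc with hc | hc
    · exact withNegs_mono Set.subset_union_left (ihφ h₁ hc)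
    · exact withNegs_mono Set.subset_union_right (ihψ h₂ hc)
  | or φ ψ ihφ ihψ =>
    obtain ⟨χ₁, ς₁, χ₂, ς₂, h₁, h₂, _, heq⟩ := h
    rw [Prod.mk.injEq] at heq
    rcases heq.2 ▸ hc with hc | hc
    · exact withNegs_mono Set.subset_union_left (ihφ h₁ hc)
    · exact withNegs_mono Set.subset_union_right (ihψ h₂ hc)
  | nextS φ ih =>
    simp only [delta, Set.mem_insert_iff, Set.mem_singleton_iff, Prod.mk.injEq] at h
    rcases h with ⟨_, rfl⟩ | ⟨_, rfl⟩ <;> simp at hc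
  | nextW φ ih =>
    simp only [delta, Set.mem_insert_iff, Set.mem_singleton_iff, Prod.mk.injEq] at h
    rcases h with ⟨_, rfl⟩ | ⟨_, rfl⟩ <;> simp at hc
  | glob φ ih =>
    obtain ⟨χ₁, ς₁, χ₂, ς₂, h₁, h₂, _, heq⟩ := h
    rw [Prod.mk.injEq] at heq
    rcases heq.2 ▸ hc with hc | hc
    · exact ih h₁ hc
    · rcases h₂ with ⟨_, rfl⟩ | h₂
      · simp at hc
      · simp only [Set.mem_singleton_iff, Prod.mk.injEq] at h₂
        rcases h₂ with ⟨_, rfl⟩; simp at hc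
  | untl φ ψ ihφ ihψ =>
    obtain ⟨χ₁, ς₁, χ₂, ς₂, h₁, h₂, _, heq⟩ := h
    rw [Prod.mk.injEq] at heq
    rcases heq.2 ▸ hc with hc | hc
    · exact withNegs_mono Set.subset_union_right (ihψ h₁ hc)
    · obtain ⟨χ₃, ς₃, χ₄, ς₄, h₃, h₄, _, heq'⟩ := h₂
      rw [Prod.mk.injEq] at heq'
      rcases heq'.2 ▸ hc with hc | hc
      · exact withNegs_mono Set.subset_union_left (ihφ h₃ hc)
      · rcases h₄ with ⟨_, rfl⟩ | h₄
        · simp at hc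
        · simp only [Set.mem_singleton_iff, Prod.mk.injEq] at h₄
          rcases h₄ with ⟨_, rfl⟩; simp at hc

lemma delta_safe {φ χ : Formula V sortOf} {ς : Sym V sortOf} (hs : SafeLB φ)
    (h : (χ, ς) ∈ delta φ) {c : Constraint V sortOf} (hc : Lit.c c ∈ ς) :
    ¬ MentionsPre c := by
  induction φ generalizing χ ς with
  | tt =>
    simp only [delta, Set.mem_singleton_iff, Prod.mk.injEq] at h
    rcases h with ⟨_, rfl⟩; exact absurd hc (Set.notMem_empty _)
  | ff =>
    simp only [delta, Set.mem_singleton_iff, Prod.mk.injEq] at h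
    rcases h with ⟨_, rfl⟩; exact absurd hc (Set.notMem_empty _)
  | atom c' =>
    simp only [delta, Set.mem_insert_iff, Set.mem_singleton_iff, Prod.mk.injEq] at h
    rcases h with ⟨_, rfl⟩ | ⟨_, rfl⟩ <;>
      simp only [Set.mem_singleton_iff, Lit.c.injEq] at hc <;> subst hc
    · exact hs
    · exact mentionsPre_neg hs
  | not φ ih =>
    cases φ <;> simp only [delta] at h <;> try exact absurd h (Set.notMem_empty _)
    case atom c' =>
      simp only [Set.mem_insert_iff, Set.mem_singleton_iff, Prod.mk.injEq] at h
      rcases h with ⟨_, rfl⟩ | ⟨_, rfl⟩ <;>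
        simp only [Set.mem_singleton_iff, Lit.c.injEq] at hc <;> subst hc
      · exact hs
      · exact mentionsPre_neg hs
  | and φ ψ ihφ ihψ =>
    obtain ⟨χ₁, ς₁, χ₂, ς₂, h₁, h₂, _, heq⟩ := h
    rw [Prod.mk.injEq] at heq
    rcases heq.2 ▸ hc with hc | hc
    · exact ihφ hs.1 h₁ hc
    · exact ihψ hs.2 h₂ hc
  | or φ ψ ihφ ihψ =>
    obtain ⟨χ₁, ς₁, χ₂, ς₂, h₁, h₂, _, heq⟩ := h
    rw [Prod.mk.injEq] at heq
    rcases heq.2 ▸ hc with hc | hc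
    · exact ihφ hs.1 h₁ hc
    · exact ihψ hs.2 h₂ hc
  | nextS φ ih =>
    simp only [delta, Set.mem_insert_iff, Set.mem_singleton_iff, Prod.mk.injEq] at h
    rcases h with ⟨_, rfl⟩ | ⟨_, rfl⟩ <;> simp at hc
  | nextW φ ih =>
    simp only [delta, Set.mem_insert_iff, Set.mem_singleton_iff, Prod.mk.injEq] at h
    rcases h with ⟨_, rfl⟩ | ⟨_, rfl⟩ <;> simp at hc
  | glob φ ih =>
    obtain ⟨χ₁, ς₁, χ₂, ς₂, h₁, h₂, _, heq⟩ := h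
    rw [Prod.mk.injEq] at heq
    rcases heq.2 ▸ hc with hc | hc
    · exact ih hs h₁ hc
    · rcases h₂ with ⟨_, rfl⟩ | h₂
      · simp at hc
      · simp only [Set.mem_singleton_iff, Prod.mk.injEq] at h₂
        rcases h₂ with ⟨_, rfl⟩; simp at hc
  | untl φ ψ ihφ ihψ =>
    obtain ⟨χ₁, ς₁, χ₂, ς₂, h₁, h₂, _, heq⟩ := h
    rw [Prod.mk.injEq] at heq
    rcases heq.2 ▸ hc with hc | hc
    · exact ihψ hs.2 h₁ hc
    · obtain ⟨χ₃, ς₃, χ₄, ς₄, h₃, h₄, _, heq'⟩ := h₂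
      rw [Prod.mk.injEq] at heq'
      rcases heq'.2 ▸ hc with hc | hc
      · exact ihφ hs.1 h₃ hc
      · rcases h₄ with ⟨_, rfl⟩ | h₄
        · simp at hc
        · simp only [Set.mem_singleton_iff, Prod.mk.injEq] at h₄
          rcases h₄ with ⟨_, rfl⟩; simp at hc

/-- Every literal of an NFA transition symbol is a constraint from `C±`. -/
lemma ntrans_lits {φ : Formula V sortOf} {ς' : Sym V sortOf} {q' : NState V sortOf}
    (h : NTrans (NState.fm φ) ς' q') :
    ∀ l ∈ ς', ∃ c, l = Lit.c c ∧ c ∈ withNegs φ.constraints ∧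
      (SafeLB φ → ¬ MentionsPre c) := by
  have key : ∀ (ς : Sym V sortOf) (χ : Formula V sortOf), (χ, ς) ∈ delta φ →
      ∀ l ∈ ς, l ≠ Lit.lam → l ≠ Lit.nlam →
      ∃ c, l = Lit.c c ∧ c ∈ withNegs φ.constraints ∧ (SafeLB φ → ¬ MentionsPre c) := by
    intro ς χ hδ l hl h1 h2
    cases l with
    | c c => exact ⟨c, rfl, delta_constr hδ hl, fun hs => delta_safe hs hδ hl⟩
    | lam => exact absurd rfl h1
    | nlam => exact absurd rfl h2
  cases h with
  | @nolam _ φ' ς hδ hlam =>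
    intro l hl
    exact key ς φ' hδ l hl.1 (fun he => hlam (he ▸ hl.1))
      (by simpa using hl.2)
  | @toPlus _ ς hδ hlam =>
    intro l hl
    have hnl : Lit.nlam ∉ ς := fun hn => delta_not_both hδ ⟨hlam, hn⟩
    exact key ς _ hδ l hl.1 (by simpa using hl.2) (fun he => hnl (he ▸ hl.1))
  | @toMinus _ ς hδ hlam =>
    intro l hl
    have hnl : Lit.nlam ∉ ς := fun hn => delta_not_both hδ ⟨hlam, hn⟩
    exact key ς _ hδ l hl.1 (by simpa using hl.2) (fun he => hnl (he ▸ hl.1))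

end Aux3
section Main

variable {V : Type} {sortOf : V → VSort}

lemma mem_withNegs_cur_of {Cs : Set (Constraint V sortOf)} {c : Constraint V sortOf}
    (h : c ∈ withNegs Cs) (hc : OnlyCur c) : c ∈ withNegs {c ∈ Cs | OnlyCur c} := by
  rcases h with hm | ⟨d, hd, rfl⟩
  · exact Or.inl ⟨hm, hc⟩
  · refine Or.inr ⟨d, ⟨hd, ?_⟩, rfl⟩
    have := onlyCur_neg hc
    rwa [Constraint.neg_neg] at this

lemma forall₂_getD {α β : Type*} {R : α → β → Prop} {l₁ : List α} {l₂ : List β}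
    (h : List.Forall₂ R l₁ l₂) (d₁ : α) (d₂ : β) :
    ∀ i < l₁.length, R (l₁.getD i d₁) (l₂.getD i d₂) := by
  induction h with
  | nil => intro i hi; simp at hi
  | cons hr _ ih =>
    intro i hi
    cases i with
    | zero => simpa using hr
    | succ i => simpa using ih i (by simpa using hi)

lemma forall₂_mem {α β : Type*} {R : α → β → Prop} {l₁ : List α} {l₂ : List β}
    (h : List.Forall₂ R l₁ l₂) {a : α} (ha : a ∈ l₁) : ∃ b ∈ l₂, R a b := by
  induction h with
  | nil => simp at ha
  | cons hr _ ih =>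
    rcases List.mem_cons.mp ha with rfl | ha
    · exact ⟨_, List.mem_cons_self, hr⟩
    · obtain ⟨b, hb, hrb⟩ := ih ha
      exact ⟨b, List.mem_cons_of_mem _ hb, hrb⟩

/-- Subset-construction extraction: any state reached by the DFA contains a
state reached by some NFA run whose symbols are covered pointwise. -/
lemma dsteps_extract {ψb : Formula V sortOf} {P P' : DState V sortOf}
    {w : List (Set (Constraint V sortOf))} (h : DSteps ψb P w P') :
    ∀ q' ∈ P', ∃ q ∈ P, ∃ u : List (Sym V sortOf), NSteps q u q' ∧
      List.Forall₂ (fun (ς' : Sym V sortOf) (ςd : Set (Constraint V sortOf)) =>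
        ∀ l ∈ ς', ∃ c ∈ ςd, l = Lit.c c) u w := by
  induction h with
  | refl P => exact fun q' hq' => ⟨q', hq', [], NSteps.refl q', List.Forall₂.nil⟩
  | @step P P₁ P'' ς w hT hS ih =>
    intro q' hq'
    obtain ⟨q₁, hq₁, u', hns, hf⟩ := ih q' hq'
    rw [hT.2] at hq₁
    obtain ⟨q, hq, ς', hN, hsub⟩ := hq₁
    exact ⟨q, hq, ς' :: u', NSteps.step hN hns, List.Forall₂.cons hsub hf⟩

lemma dsteps_theta {ψb : Formula V sortOf} {P P' : DState V sortOf}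
    {w : List (Set (Constraint V sortOf))} (h : DSteps ψb P w P') :
    ∀ ς ∈ w, ς ∈ ThetaCur ψb.constraints ∨ ς ∈ ThetaOf ψb.constraints := by
  induction h with
  | refl P => simp
  | @step P P₁ P'' ς w hT hS ih =>
    intro ςx hςx
    rcases List.mem_cons.mp hςx with rfl | hm
    · rcases hT.1 with ⟨_, hθ⟩ | ⟨_, hθ⟩
      · exact Or.inl hθ
      · exact Or.inr hθ
    · exact ih ςx hm

/-- From an NFA run consistent with the trace, build a DFA run over `Θ_cur Θ*`
whose symbols hold on the trace. -/
lemma nfa_to_dfa {ψb : Formula V sortOf} (hPC : ∀ c ∈ ψb.constraints, OnlyPC c)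
    (hsafe : SafeLB ψb) (τ : Trace V sortOf) :
    ∀ {u : List (Sym V sortOf)} {q q' : NState V sortOf}, NSteps q u q' →
    ∀ (i : ℕ) (P : DState V sortOf), q ∈ P →
    (∀ j, j < u.length → ∀ l ∈ u.getD j ∅, ∃ c, l = Lit.c c ∧
        c ∈ withNegs ψb.constraints ∧ c.holds (traceVal τ (i + j))) →
    ∃ (w : List (Set (Constraint V sortOf))) (P' : DState V sortOf),
      DSteps ψb P w P' ∧ q' ∈ P' ∧ w.length = u.length ∧
      ∀ j, j < w.length → ∀ c ∈ w.getD j ∅, c.holds (traceVal τ (i + j)) := by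
  intro u q q' hns
  induction hns with
  | refl q =>
    intro i P hq _
    exact ⟨[], P, DSteps.refl P, hq, rfl, fun j hj => by simp at hj⟩
  | @step q q₁ q'' ς u' hT hns ih =>
    intro i P hq H
    have H0 : ∀ l ∈ ς, ∃ c, l = Lit.c c ∧
        c ∈ withNegs ψb.constraints ∧ c.holds (traceVal τ i) := by
      intro l hl
      obtain ⟨c, hlc, hcw, hch⟩ := H 0 (by simp) l (by simpa using hl)
      exact ⟨c, hlc, hcw, by simpa using hch⟩
    have H' : ∀ (P₁ : DState V sortOf), q₁ ∈ P₁ →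
        ∃ (w : List (Set (Constraint V sortOf))) (P' : DState V sortOf),
          DSteps ψb P₁ w P' ∧ q'' ∈ P' ∧ w.length = u'.length ∧
          ∀ j, j < w.length → ∀ c ∈ w.getD j ∅, c.holds (traceVal τ (i + 1 + j)) := by
      intro P₁ hq₁
      refine ih (i + 1) P₁ hq₁ ?_
      intro j hj l hl
      obtain ⟨c, hlc, hcw, hch⟩ := H (j + 1) (by simpa using hj) l (by simpa using hl)
      refine ⟨c, hlc, hcw, ?_⟩
      have : i + (j + 1) = i + 1 + j := by omega
      rwa [this] at hch
    by_cases hP : P = q0 ψb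
    · -- initial state: use a `Θ_cur` symbol
      have hqψ : q = NState.fm ψb := by rw [hP] at hq; exact hq
      set ςd := maxSet {c ∈ ψb.constraints | OnlyCur c} (traceVal τ i) with hςd
      have hsub : ∀ l ∈ ς, ∃ c ∈ ςd, l = Lit.c c := by
        intro l hl
        obtain ⟨c, rfl, hcw, hch⟩ := H0 l hl
        have hpre : ¬ MentionsPre c := by
          obtain ⟨c', hlc', _, hpre'⟩ := ntrans_lits (hqψ ▸ hT) (Lit.c c) hl
          cases hlc'
          exact hpre' hsafe
        exact ⟨c, mem_maxSet (mem_withNegs_cur_of hcw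
          (onlyCur_of_onlyPC (mem_withNegs_onlyPC hPC hcw) hpre)) hch, rfl⟩
      have hθ : ςd ∈ ThetaCur ψb.constraints := maxSet_mem_theta _ _
      have hq₁ : q₁ ∈ DeltaT P ςd := ⟨q, hq, ς, hT, hsub⟩
      obtain ⟨w, P', hds, hq'', hlen, hhold⟩ := H' (DeltaT P ςd) hq₁
      refine ⟨ςd :: w, P', DSteps.step ⟨Or.inl ⟨hP, hθ⟩, rfl⟩ hds, hq'', by simp [hlen], ?_⟩
      intro j hj c hc
      cases j with
      | zero =>
        simp only [List.getD_cons_zero] at hc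
        simpa using maxSet_holds hc
      | succ j =>
        simp only [List.getD_cons_succ] at hc
        have := hhold j (by simpa using hj) c hc
        have he : i + 1 + j = i + (j + 1) := by omega
        rwa [he] at this
    · -- non-initial state: use a `Θ` symbol
      set ςd := maxSet ψb.constraints (traceVal τ i) with hςd
      have hsub : ∀ l ∈ ς, ∃ c ∈ ςd, l = Lit.c c := by
        intro l hl
        obtain ⟨c, rfl, hcw, hch⟩ := H0 l hl
        exact ⟨c, mem_maxSet hcw hch, rfl⟩
      have hθ : ςd ∈ ThetaOf ψb.constraints := maxSet_mem_theta _ _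
      have hq₁ : q₁ ∈ DeltaT P ςd := ⟨q, hq, ς, hT, hsub⟩
      obtain ⟨w, P', hds, hq'', hlen, hhold⟩ := H' (DeltaT P ςd) hq₁
      refine ⟨ςd :: w, P', DSteps.step ⟨Or.inr ⟨hP, hθ⟩, rfl⟩ hds, hq'', by simp [hlen], ?_⟩
      intro j hj c hc
      cases j with
      | zero =>
        simp only [List.getD_cons_zero] at hc
        simpa using maxSet_holds hc
      | succ j =>
        simp only [List.getD_cons_succ] at hc
        have := hhold j (by simpa using hj) c hc
        have he : i + 1 + j = i + (j + 1) := by omega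
        rwa [he] at this

end Main
/-- the DFA `D_{ψ_back}` accepts a word consistent with `τ` iff
the NFA `N_{ψ_back}` accepts a word consistent with `τ`. -/
theorem dfa_iff_nfa_consistent_acceptance
    {V : Type} [Fintype V] [Nonempty V] {sortOf : V → VSort}
    (ψ : Formula V sortOf) (hψ : IsL ψ) (h1 : LookaheadLe ψ 1)
    (τ : Trace V sortOf) (hτ : τ ≠ []) :
    (∃ w : List (Set (Constraint V sortOf)),
        ConsistentC w τ ∧ DAccepts (backF ψ) w) ↔
    (∃ u : List (Sym V sortOf), WellFormedW u ∧
        (∀ ς ∈ u, InSigma (Formula.constraints (backF ψ)) ς) ∧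
        ConsistentL u τ ∧ NAccepts (backF ψ) u) := by
  have hτlen : 0 < τ.length := List.length_pos_iff.mpr hτ
  constructor
  · -- DFA ⇒ NFA
    rintro ⟨w, ⟨hwlen, hwcons⟩, P, hsteps, hfin⟩
    have hex : ∃ qf : NState V sortOf, qf ∈ P ∧
        (qf = NState.fm Formula.tt ∨ qf = NState.plus) := by
      rcases hfin with h | h
      · exact ⟨_, h, Or.inl rfl⟩
      · exact ⟨_, h, Or.inr rfl⟩
    obtain ⟨qf, hqfP, hqf⟩ := hex
    obtain ⟨q, hq, u, hns, hf⟩ := dsteps_extract hsteps qf hqfP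
    have hq' : q = NState.fm (backF ψ) := hq
    subst hq'
    have hulen : u.length = w.length := hf.length_eq
    refine ⟨u, ?_, ?_, ⟨by rw [hulen, hwlen], ?_⟩, qf, hns, hqf⟩
    · -- well-formedness
      cases u with
      | nil =>
        exfalso
        rw [← hwlen, ← hulen] at hτlen
        simp at hτlen
      | cons ς₀ u' =>
        cases w with
        | nil => cases hf
        | cons ςd₀ w' =>
          cases hf with
          | cons hr hf' =>
            cases hsteps with
            | step hT hS =>
              rcases hT.1 with ⟨_, hθ⟩ | ⟨hne, _⟩
              · intro c hc
                obtain ⟨c', hc', heq⟩ := hr (Lit.c c) hc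
                cases heq
                exact onlyCur_not_mentionsPre (mem_withNegs_cur_onlyCur (hθ.1 hc'))
              · exact absurd rfl hne
    · -- alphabet membership
      intro ς hςu
      obtain ⟨ςd, hςd, hR⟩ := forall₂_mem hf hςu
      have hsub : ςd ⊆ withNegs (backF ψ).constraints := by
        rcases dsteps_theta hsteps ςd hςd with hθ | hθ
        · exact fun c hc => withNegs_mono (Set.sep_subset _ _) (hθ.1 hc)
        · exact hθ.1
      intro l hl
      obtain ⟨c, hc, heq⟩ := hR l hl
      exact ⟨c, hsub hc, heq⟩
    · -- consistency
      intro i hi c hc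
      obtain ⟨c', hc', heq⟩ := forall₂_getD hf ∅ ∅ i hi (Lit.c c) hc
      injection heq with h'
      subst h'
      exact hwcons i (hulen ▸ hi) c hc'
  · -- NFA ⇒ DFA
    rintro ⟨u, hwf, hsig, ⟨hulen, hucons⟩, qf, hns, hqf⟩
    obtain ⟨w, P', hds, hqP, hwlen, hwhold⟩ :=
      nfa_to_dfa (backF_onlyPC h1) (backF_safe ψ) τ hns 0 (q0 (backF ψ)) rfl
        (by
          intro j hj l hl
          have hget : u.getD j ∅ = u[j] := List.getD_eq_getElem u ∅ hj
          have hmem : u.getD j ∅ ∈ u := by rw [hget]; exact List.getElem_mem _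
          obtain ⟨c, hcw, rfl⟩ := hsig _ hmem l hl
          exact ⟨c, rfl, hcw, by simpa using hucons j hj c hl⟩)
    refine ⟨w, ⟨by rw [hwlen, hulen], ?_⟩, P', hds, ?_⟩
    · intro i hi c hc
      simpa using hwhold i hi c hc
    · rcases hqf with rfl | rfl
      · exact Or.inl hqP
      · exact Or.inr hqP

end ALTLf
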